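/- Let G be a finite connected simple graph with a full-dimensional hypercube isometry μ : V → {0,1}^τ, and let M be a matching of maximum size in the semicube graph Sc(G). Then the lattice dimension of G equals τ − |M|; that is, G has an isometric embedding into ℤ^{τ−|M|}, and G has no isometric embedding into ℤ^{d'} for any d' < τ − |M|. -/

import Mathlib

/-- The semicube `S_{i,χ} = {v | μ_i(v) = χ}` of a hypercube embedding `μ`. -/
def semicube {V ι : Type*} (μ : V → ι → Bool) (i : ι) (χ : Bool) : Set V :=
  {v | μ v i = χ}

/-- The semicube graph `Sc(G)`: vertices are the pairs `(i,χ)` (representing the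
semicubes `S_{i,χ}`), with an edge between two distinct pairs exactly when the
corresponding semicubes cover all vertices and intersect nontrivially. -/
def semicubeGraph {V ι : Type*} (μ : V → ι → Bool) : SimpleGraph (ι × Bool) where
  Adj p q := p ≠ q ∧
    semicube μ p.1 p.2 ∪ semicube μ q.1 q.2 = Set.univ ∧
    (semicube μ p.1 p.2 ∩ semicube μ q.1 q.2).Nonempty
  symm := by
    constructor
    rintro p q ⟨h1, h2, h3⟩
    exact ⟨h1.symm, by rwa [Set.union_comm], by rwa [Set.inter_comm]⟩
  loopless := by constructor; rintro p ⟨h1, -⟩; exact h1 rfl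

/-- `M` is a matching in the graph `H`: a finite set of edges of `H`,
no two of which share an endpoint. -/
def IsMatchingIn {α : Type*} (H : SimpleGraph α) (M : Finset (Sym2 α)) : Prop :=
  (∀ e ∈ M, e ∈ H.edgeSet) ∧
    ∀ e ∈ M, ∀ f ∈ M, e ≠ f → ∀ a, a ∈ e → a ∉ f

open Finset

namespace EppAux
set_option linter.unusedSectionVars false
set_option maxHeartbeats 1000000

variable {V : Type*} [Fintype V] [DecidableEq V] {τ : ℕ}
  {μ : V → Fin τ → Bool} {M : Finset (Sym2 (Fin τ × Bool))}

def SC (μ : V → Fin τ → Bool) (p : Fin τ × Bool) : Set V := {v | μ v p.1 = p.2}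

lemma SC_semicube (p : Fin τ × Bool) : SC μ p = semicube μ p.1 p.2 := rfl

def flipP (p : Fin τ × Bool) : Fin τ × Bool := (p.1, !p.2)

@[simp] lemma flipP_flipP (p : Fin τ × Bool) : flipP (flipP p) = p := by simp [flipP]

lemma SC_flip (p : Fin τ × Bool) : SC μ (flipP p) = (SC μ p)ᶜ := by
  ext v
  simp only [SC, flipP, Set.mem_setOf_eq, Set.mem_compl_iff]
  cases h : μ v p.1 <;> cases h2 : p.2 <;> simp

lemma mem_SC_or (v : V) (p : Fin τ × Bool) : v ∈ SC μ p ∨ v ∈ SC μ (flipP p) := by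
  rw [SC_flip]; exact (em (v ∈ SC μ p)).imp id id

lemma hamming_card {ι : Type*} [Fintype ι] [DecidableEq ι] (x y : ι → Bool) :
    hammingDist x y = (univ.filter (fun i => x i ≠ y i)).card := rfl

lemma abs_sum_of_sign {ι : Type*} {s : Finset ι} {f : ι → ℤ}
    (h : (∀ j ∈ s, 0 ≤ f j) ∨ (∀ j ∈ s, f j ≤ 0)) :
    |∑ j ∈ s, f j| = ∑ j ∈ s, |f j| := by
  rcases h with h | h
  · rw [abs_of_nonneg (Finset.sum_nonneg h)]
    exact Finset.sum_congr rfl fun j hj => (abs_of_nonneg (h j hj)).symm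
  · rw [abs_of_nonpos (Finset.sum_nonpos h), ← Finset.sum_neg_distrib]
    exact Finset.sum_congr rfl fun j hj => (abs_of_nonpos (h j hj)).symm

/-- `g`: from `p`, follow the matching edge at `flipP p` (if any). -/
noncomputable def gmap (M : Finset (Sym2 (Fin τ × Bool))) (p : Fin τ × Bool) : Fin τ × Bool :=
  if h : ∃ e ∈ M, flipP p ∈ e then Sym2.Mem.other h.choose_spec.2 else p

lemma gmap_of_not (p : Fin τ × Bool) (h : ¬ ∃ e ∈ M, flipP p ∈ e) : gmap M p = p :=
  dif_neg h

lemma gmap_mem_of (p : Fin τ × Bool) (h : ∃ e ∈ M, flipP p ∈ e) :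
    s(flipP p, gmap M p) ∈ M := by
  rw [gmap, dif_pos h]
  rw [Sym2.other_spec h.choose_spec.2]
  exact h.choose_spec.1

variable (hM : IsMatchingIn (semicubeGraph μ) M)
include hM

lemma adj_of_mem {a b : Fin τ × Bool} (h : s(a, b) ∈ M) :
    a ≠ b ∧ SC μ a ∪ SC μ b = Set.univ ∧ (SC μ a ∩ SC μ b).Nonempty :=
  (semicubeGraph μ).mem_edgeSet.mp (hM.1 _ h)

lemma not_flip_edge (p : Fin τ × Bool) : s(flipP p, p) ∉ M := by
  intro h
  obtain ⟨-, -, x, hx1, hx2⟩ := adj_of_mem hM h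
  rw [SC_flip] at hx1
  exact hx1 hx2

/-- uniqueness: determine `gmap` from any matching edge at `flipP p`. -/
lemma gmap_eq {p q : Fin τ × Bool} (h : s(flipP p, q) ∈ M) : gmap M p = q := by
  have hex : ∃ e ∈ M, flipP p ∈ e := ⟨s(flipP p, q), h, Sym2.mem_mk_left _ _⟩
  have hmem := gmap_mem_of (M := M) p hex
  -- both edges contain flipP p, so they are equal
  have heq : s(flipP p, gmap M p) = s(flipP p, q) := by
    by_contra hne
    exact hM.2 _ hmem _ h hne (flipP p) (Sym2.mem_mk_left _ _) (Sym2.mem_mk_left _ _)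
  exact (Sym2.congr_right.mp heq)

lemma gmap_ne_of (p : Fin τ × Bool) (h : ∃ e ∈ M, flipP p ∈ e) : gmap M p ≠ p := by
  intro hc
  have := gmap_mem_of (M := M) p h
  rw [hc] at this
  exact not_flip_edge hM p this

lemma gmap_edge {p : Fin τ × Bool} (h : gmap M p ≠ p) : s(flipP p, gmap M p) ∈ M := by
  by_cases hex : ∃ e ∈ M, flipP p ∈ e
  · exact gmap_mem_of p hex
  · exact absurd (gmap_of_not p hex) h

lemma SC_subset_gmap (p : Fin τ × Bool) : SC μ p ⊆ SC μ (gmap M p) := by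
  by_cases h : gmap M p = p
  · rw [h]
  · have hadj := adj_of_mem hM (gmap_edge hM h)
    obtain ⟨-, hu, -⟩ := hadj
    intro x hx
    have : x ∈ SC μ (flipP p) ∪ SC μ (gmap M p) := by
      rw [hu]; trivial
    rcases this with hx' | hx'
    · rw [SC_flip] at hx'; exact absurd hx hx'
    · exact hx'

lemma SC_ssubset_gmap {p : Fin τ × Bool} (h : gmap M p ≠ p) :
    SC μ p ⊂ SC μ (gmap M p) := by
  refine ⟨SC_subset_gmap hM p, fun hsub => ?_⟩
  obtain ⟨-, -, x, hx1, hx2⟩ := adj_of_mem hM (gmap_edge hM h)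
  rw [SC_flip] at hx1
  exact hx1 (hsub hx2)

lemma uniq_pred {x y : Fin τ × Bool} (hxy : gmap M x = gmap M y)
    (hx : gmap M x ≠ x) (hy : gmap M y ≠ y) : x = y := by
  have ex := gmap_edge hM hx
  have ey := gmap_edge hM hy
  rw [← hxy] at ey
  have heq : s(flipP x, gmap M x) = s(flipP y, gmap M x) := by
    by_contra hne
    exact hM.2 _ ex _ ey hne (gmap M x) (Sym2.mem_mk_right _ _) (Sym2.mem_mk_right _ _)
  have := Sym2.congr_left.mp heq
  have := congrArg flipP this
  simpa using this

lemma gmap_flip_gmap {p : Fin τ × Bool} (h : gmap M p ≠ p) :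
    gmap M (flipP (gmap M p)) = flipP p := by
  apply gmap_eq hM
  rw [flipP_flipP, Sym2.eq_swap]
  exact gmap_edge hM h


/-- The root map: iterate `gmap` enough times. -/
noncomputable def rmap (N : ℕ) (M : Finset (Sym2 (Fin τ × Bool))) (p : Fin τ × Bool) :
    Fin τ × Bool :=
  (gmap M)^[N] p

lemma SC_subset_iter (p : Fin τ × Bool) (k : ℕ) : SC μ p ⊆ SC μ ((gmap M)^[k] p) := by
  induction k with
  | zero => rfl
  | succ n ih =>
    rw [Function.iterate_succ_apply']
    exact ih.trans (SC_subset_gmap hM _)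

variable (hfull : ∀ i : Fin τ, (∃ v, μ v i = false) ∧ (∃ v, μ v i = true))
include hfull

omit hM in
lemma SC_nonempty (p : Fin τ × Bool) : (SC μ p).Nonempty := by
  rcases p with ⟨i, b⟩
  cases b
  · exact (hfull i).1
  · exact (hfull i).2

lemma rmap_fix (p : Fin τ × Bool) :
    gmap M (rmap (Fintype.card V) M p) = rmap (Fintype.card V) M p := by
  by_contra hne
  set N := Fintype.card V with hN
  have hall : ∀ k, k ≤ N → gmap M ((gmap M)^[k] p) ≠ (gmap M)^[k] p := by
    intro k hk hfix
    apply hne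
    have : (gmap M)^[N] p = (gmap M)^[k] p := by
      have : N = k + (N - k) := by omega
      rw [this, Nat.add_comm, Function.iterate_add_apply]
      exact Function.iterate_fixed hfix _
    rw [rmap, this, hfix]
  have hgrow : ∀ k, k ≤ N → (SC μ p).ncard + k ≤ (SC μ ((gmap M)^[k] p)).ncard := by
    intro k
    induction k with
    | zero => simp
    | succ n ih =>
      intro hk
      have h1 := ih (by omega)
      have h2 : (SC μ ((gmap M)^[n] p)).ncard < (SC μ ((gmap M)^[n+1] p)).ncard := by
        rw [Function.iterate_succ_apply']
        exact Set.ncard_lt_ncard (SC_ssubset_gmap hM (hall n (by omega))) (Set.toFinite _)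
      omega
  have h1 := hgrow N le_rfl
  have h2 : 1 ≤ (SC μ p).ncard :=
    (Set.ncard_pos (Set.toFinite _)).mpr (SC_nonempty hfull p)
  have h3 : (SC μ ((gmap M)^[N] p)).ncard ≤ N := by
    have := Set.ncard_le_ncard (Set.subset_univ (SC μ ((gmap M)^[N] p))) (Set.toFinite _)
    rwa [Set.ncard_univ, Nat.card_eq_fintype_card] at this
  omega


lemma r_of_fix {p : Fin τ × Bool} (h : gmap M p = p) : rmap (Fintype.card V) M p = p :=
  Function.iterate_fixed h _

omit hfull in
lemma SC_subset_rmap (p : Fin τ × Bool) : SC μ p ⊆ SC μ (rmap (Fintype.card V) M p) :=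
  SC_subset_iter hM p _

lemma r_g (p : Fin τ × Bool) :
    rmap (Fintype.card V) M (gmap M p) = rmap (Fintype.card V) M p := by
  show (gmap M)^[Fintype.card V] (gmap M p) = _
  rw [← Function.iterate_succ_apply, Function.iterate_succ_apply']
  exact rmap_fix hM hfull p

lemma r_idem (p : Fin τ × Bool) :
    rmap (Fintype.card V) M (rmap (Fintype.card V) M p) = rmap (Fintype.card V) M p :=
  r_of_fix hM hfull (rmap_fix hM hfull p)

lemma r_iter (p : Fin τ × Bool) (k : ℕ) :
    rmap (Fintype.card V) M ((gmap M)^[k] p) = rmap (Fintype.card V) M p := by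
  induction k with
  | zero => rfl
  | succ n ih => rw [Function.iterate_succ_apply', r_g hM hfull, ih]

lemma root_of_fixed_iter {p : Fin τ × Bool} {m : ℕ}
    (h : gmap M ((gmap M)^[m] p) = (gmap M)^[m] p) :
    rmap (Fintype.card V) M p = (gmap M)^[m] p := by
  rw [← r_iter hM hfull p m]
  exact r_of_fix hM hfull h

lemma roots_ne (p : Fin τ × Bool) :
    rmap (Fintype.card V) M p ≠ rmap (Fintype.card V) M (flipP p) := by
  intro heq
  obtain ⟨x, hx⟩ := SC_nonempty hfull (flipP (rmap (Fintype.card V) M p))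
  rw [SC_flip] at hx
  rcases mem_SC_or (μ := μ) x p with h | h
  · exact hx (SC_subset_rmap hM p h)
  · refine hx ?_
    rw [heq]
    exact SC_subset_rmap hM (flipP p) h

lemma r_flip_g (p : Fin τ × Bool) :
    rmap (Fintype.card V) M (flipP (gmap M p)) = rmap (Fintype.card V) M (flipP p) := by
  by_cases h : gmap M p = p
  · rw [h]
  · have h8 := gmap_flip_gmap hM h
    calc rmap (Fintype.card V) M (flipP (gmap M p))
        = rmap (Fintype.card V) M (gmap M (flipP (gmap M p))) := (r_g hM hfull _).symm
      _ = rmap (Fintype.card V) M (flipP p) := by rw [h8]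

lemma r_flip_r (p : Fin τ × Bool) :
    rmap (Fintype.card V) M (flipP (rmap (Fintype.card V) M p)) =
      rmap (Fintype.card V) M (flipP p) := by
  have key : ∀ k : ℕ, rmap (Fintype.card V) M (flipP ((gmap M)^[k] p)) =
      rmap (Fintype.card V) M (flipP p) := by
    intro k
    induction k with
    | zero => rfl
    | succ n ih => rw [Function.iterate_succ_apply', r_flip_g hM hfull, ih]
  exact key _


lemma pred_lemma {p x : Fin τ × Bool} (hgx : gmap M x = rmap (Fintype.card V) M p)
    (hx : x ≠ rmap (Fintype.card V) M p) (hp : p ≠ rmap (Fintype.card V) M p) :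
    ∃ k, (gmap M)^[k] p = x := by
  classical
  have hex : ∃ m, (gmap M)^[m] p = rmap (Fintype.card V) M p := ⟨Fintype.card V, rfl⟩
  set m := Nat.find hex with hm
  have hfind : (gmap M)^[m] p = rmap (Fintype.card V) M p := Nat.find_spec hex
  have hm1 : 1 ≤ m := by
    rcases Nat.eq_zero_or_pos m with h0 | h1
    · exfalso; apply hp; rw [← hfind, h0]; rfl
    · exact h1
  have hy : gmap M ((gmap M)^[m-1] p) = rmap (Fintype.card V) M p := by
    have h1 : gmap M ((gmap M)^[m-1] p) = (gmap M)^[m-1+1] p :=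
      (Function.iterate_succ_apply' _ _ _).symm
    have h2 : m - 1 + 1 = m := by omega
    rw [h1, h2, hfind]
  have hyne : (gmap M)^[m-1] p ≠ rmap (Fintype.card V) M p := by
    intro hc
    exact absurd hc (Nat.find_min hex (by omega))
  refine ⟨m - 1, ?_⟩
  have := uniq_pred hM (x := (gmap M)^[m-1] p) (y := x) (by rw [hy, hgx])
    (by rw [hy]; exact fun hc => hyne hc.symm) (by rw [hgx]; exact fun hc => hx hc.symm)
  exact this

lemma claimC : ∀ (n : ℕ) (p q : Fin τ × Bool),
    (gmap M)^[n] q = rmap (Fintype.card V) M p →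
    (∃ k, (gmap M)^[k] p = q) ∨ (∃ k, (gmap M)^[k] q = p) := by
  intro n
  induction n with
  | zero =>
    intro p q h
    exact Or.inl ⟨Fintype.card V, h.symm⟩
  | succ n ih =>
    intro p q h
    by_cases hq : gmap M q = q
    · left
      refine ⟨Fintype.card V, ?_⟩
      show rmap (Fintype.card V) M p = q
      rw [← h, Function.iterate_fixed hq]
    by_cases hp : gmap M p = p
    · right
      refine ⟨n + 1, ?_⟩
      rw [h]
      exact r_of_fix hM hfull hp
    have h' : (gmap M)^[n] (gmap M q) = rmap (Fintype.card V) M p := by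
      rw [← Function.iterate_succ_apply]; exact h
    rcases ih p (gmap M q) h' with ⟨k, hk⟩ | ⟨k, hk⟩
    · -- g^[k] p = g q
      cases k with
      | zero => exact Or.inr ⟨1, hk.symm⟩
      | succ m =>
        rw [Function.iterate_succ_apply'] at hk
        by_cases hfix : gmap M ((gmap M)^[m] p) = (gmap M)^[m] p
        · -- g^[m] p is fixed, hence equals the root, and g q = root
          have hroot : rmap (Fintype.card V) M p = (gmap M)^[m] p :=
            root_of_fixed_iter hM hfull hfix
          have hgq : gmap M q = rmap (Fintype.card V) M p := by
            rw [← hk, hfix, hroot]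
          have hqne : q ≠ rmap (Fintype.card V) M p := fun hc =>
            hq (hgq.trans hc.symm)
          have hpne : p ≠ rmap (Fintype.card V) M p := by
            intro hc
            apply hp
            have hfixr := rmap_fix hM hfull p
            rw [← hc] at hfixr
            exact hfixr
          exact Or.inl (pred_lemma hM hfull hgq hqne hpne)
        · have := uniq_pred hM (x := (gmap M)^[m] p) (y := q) hk hfix hq
          exact Or.inl ⟨m, this⟩
    · exact Or.inr ⟨k + 1, by rw [Function.iterate_succ_apply]; exact hk⟩

lemma SC_comp {p q : Fin τ × Bool}
    (h : rmap (Fintype.card V) M p = rmap (Fintype.card V) M q) :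
    SC μ p ⊆ SC μ q ∨ SC μ q ⊆ SC μ p := by
  have : (gmap M)^[Fintype.card V] q = rmap (Fintype.card V) M p := h.symm
  rcases claimC hM hfull (Fintype.card V) p q this with ⟨k, hk⟩ | ⟨k, hk⟩
  · left; rw [← hk]; exact SC_subset_iter hM p k
  · right; rw [← hk]; exact SC_subset_iter hM q k


def ord (p : Fin τ × Bool) : ℕ := 2 * (p.1 : ℕ) + cond p.2 1 0

omit hM hfull in
lemma ord_inj {p q : Fin τ × Bool} (h : ord p = ord q) : p = q := by
  rcases p with ⟨i, a⟩; rcases q with ⟨j, b⟩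
  cases a <;> cases b <;>
    · simp only [ord, cond] at h
      have : (i : ℕ) = (j : ℕ) := by omega
      simp_all [Fin.ext_iff]

/-- The chosen orientation of each coordinate: towards the larger root. -/
noncomputable def chi (N : ℕ) (M : Finset (Sym2 (Fin τ × Bool))) (i : Fin τ) : Bool :=
  decide (ord (rmap N M (i, false)) < ord (rmap N M (i, true)))

/-- The chosen semicube-vertex of coordinate `i`. -/
noncomputable def pc (N : ℕ) (M : Finset (Sym2 (Fin τ × Bool))) (i : Fin τ) : Fin τ × Bool :=
  (i, chi N M i)

omit hM hfull in
lemma pc_fst (N : ℕ) (i : Fin τ) : (pc N M i).1 = i := rfl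

lemma chi_spec (i : Fin τ) :
    ord (rmap (Fintype.card V) M (flipP (pc (Fintype.card V) M i))) <
      ord (rmap (Fintype.card V) M (pc (Fintype.card V) M i)) := by
  have hne : rmap (Fintype.card V) M (i, false) ≠ rmap (Fintype.card V) M (i, true) := by
    have := roots_ne hM hfull (p := (i, false))
    simpa [flipP] using this
  have hord : ord (rmap (Fintype.card V) M (i, false)) ≠
      ord (rmap (Fintype.card V) M (i, true)) := fun hc => hne (ord_inj hc)
  by_cases h : ord (rmap (Fintype.card V) M (i, false)) <
      ord (rmap (Fintype.card V) M (i, true))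
  · have hchi : chi (Fintype.card V) M i = true := by simp [chi, h]
    simpa [pc, hchi, flipP] using h
  · have hchi : chi (Fintype.card V) M i = false := by simp [chi, h]
    have : ord (rmap (Fintype.card V) M (i, true)) <
        ord (rmap (Fintype.card V) M (i, false)) := by omega
    simpa [pc, hchi, flipP] using this

lemma root_chosen (j : Fin τ) :
    rmap (Fintype.card V) M (pc (Fintype.card V) M j) =
      pc (Fintype.card V) M ((rmap (Fintype.card V) M (pc (Fintype.card V) M j)).1) := by
  set N := Fintype.card V
  set s := rmap N M (pc N M j) with hs
  have hsp : s = ((s.1 : Fin τ), s.2) := rfl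
  -- r (s.1, s.2) = s  and  r (s.1, !s.2) is smaller
  have h1 : rmap N M (s.1, s.2) = s := by
    rw [← hsp, hs]
    exact r_idem hM hfull _
  have h2 : rmap N M (s.1, !s.2) = rmap N M (flipP (pc N M j)) := by
    have : ((s.1 : Fin τ), !s.2) = flipP s := rfl
    rw [this, hs]
    exact r_flip_r hM hfull _
  have h3 : ord (rmap N M (s.1, !s.2)) < ord (rmap N M (s.1, s.2)) := by
    rw [h1, h2, hs]
    exact chi_spec hM hfull j
  -- conclude chi N M s.1 = s.2
  have hchi : chi N M s.1 = s.2 := by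
    cases hb : s.2 with
    | false =>
      have : ¬ ord (rmap N M (s.1, false)) < ord (rmap N M (s.1, true)) := by
        rw [hb] at h3; simp only [Bool.not_false] at h3; omega
      simp [chi, this]
    | true =>
      have : ord (rmap N M (s.1, false)) < ord (rmap N M (s.1, true)) := by
        rw [hb] at h3; simpa using h3
      simp [chi, this]
  rw [pc, hchi]

lemma card_not_fixed :
    (univ.filter fun i : Fin τ =>
      ¬ gmap M (pc (Fintype.card V) M i) = pc (Fintype.card V) M i).card = M.card := by
  apply Finset.card_bij (fun i _ =>
    s(flipP (pc (Fintype.card V) M i), gmap M (pc (Fintype.card V) M i)))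
  · intro a ha
    rw [Finset.mem_filter] at ha
    exact gmap_edge hM ha.2
  · intro a ha b hb hab
    rw [Sym2.eq_iff] at hab
    rcases hab with ⟨h1, h2⟩ | ⟨h1, h2⟩
    · have := congrArg Prod.fst h1
      simpa [flipP, pc] using this
    · exfalso
      have c1 := chi_spec hM hfull a
      have c2 := chi_spec hM hfull b
      rw [h1, r_g hM hfull] at c1
      rw [← h2, r_g hM hfull] at c2
      omega
  · intro e he
    have key : ∀ x y : Fin τ × Bool, s(x, y) ∈ M →
        x.2 ≠ chi (Fintype.card V) M x.1 →
        ∃ a, (a ∈ univ.filter fun i : Fin τ =>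
            ¬ gmap M (pc (Fintype.card V) M i) = pc (Fintype.card V) M i) ∧
          s(flipP (pc (Fintype.card V) M a), gmap M (pc (Fintype.card V) M a)) = s(x, y) := by
      intro x y hxy hx2
      have hxflip : x = flipP (pc (Fintype.card V) M x.1) := by
        rcases x with ⟨i, b⟩
        simp only [flipP, pc] at hx2 ⊢
        cases b <;> cases hc : chi (Fintype.card V) M i <;> simp_all
      have hg : gmap M (pc (Fintype.card V) M x.1) = y := by
        apply gmap_eq hM
        rw [← hxflip]
        exact hxy
      have hex : ∃ e ∈ M, flipP (pc (Fintype.card V) M x.1) ∈ e :=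
        ⟨s(x, y), hxy, by rw [← hxflip]; exact Sym2.mem_mk_left _ _⟩
      refine ⟨x.1, ?_, ?_⟩
      · rw [Finset.mem_filter]
        exact ⟨mem_univ _, gmap_ne_of hM (pc (Fintype.card V) M x.1) hex⟩
      · rw [hg, ← hxflip]
    revert he
    induction e using Sym2.ind with
    | _ x y =>
      intro he
      by_cases hx2 : x.2 ≠ chi (Fintype.card V) M x.1
      · obtain ⟨a, ha, heq⟩ := key x y he hx2
        exact ⟨a, ha, heq⟩
      by_cases hy2 : y.2 ≠ chi (Fintype.card V) M y.1
      · obtain ⟨a, ha, heq⟩ := key y x (by rwa [Sym2.eq_swap]) hy2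
        exact ⟨a, ha, by rw [heq, Sym2.eq_swap]⟩
      push_neg at hx2 hy2
      exfalso
      have hxe : x = pc (Fintype.card V) M x.1 := by
        rcases x with ⟨i, b⟩; simp only [pc]; rw [← hx2]
      have hye : y = pc (Fintype.card V) M y.1 := by
        rcases y with ⟨i, b⟩; simp only [pc]; rw [← hy2]
      have g1 : gmap M (flipP (pc (Fintype.card V) M x.1)) = pc (Fintype.card V) M y.1 := by
        apply gmap_eq hM
        rw [flipP_flipP, ← hxe, ← hye]
        exact he
      have g2 : gmap M (flipP (pc (Fintype.card V) M y.1)) = pc (Fintype.card V) M x.1 := by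
        apply gmap_eq hM
        rw [flipP_flipP, ← hxe, ← hye, Sym2.eq_swap]
        exact he
      have c1 := chi_spec hM hfull x.1
      have c2 := chi_spec hM hfull y.1
      rw [← r_g hM hfull (flipP (pc (Fintype.card V) M x.1)), g1] at c1
      rw [← r_g hM hfull (flipP (pc (Fintype.card V) M y.1)), g2] at c2
      omega


lemma part1 (G : SimpleGraph V)
    (hiso : ∀ u v : V, hammingDist (μ u) (μ v) = G.dist u v) :
    ∃ lam : V → Fin (τ - M.card) → ℤ,
      ∀ u v : V, ∑ i, |lam u i - lam v i| = (G.dist u v : ℤ) := by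
  classical
  set Iset : Finset (Fin τ) :=
    univ.filter (fun i : Fin τ =>
      gmap M (pc (Fintype.card V) M i) = pc (Fintype.card V) M i) with hIset
  have hcard : Iset.card = τ - M.card := by
    have hsplit := Finset.card_filter_add_card_filter_not
      (s := (univ : Finset (Fin τ)))
      (p := fun i : Fin τ =>
        gmap M (pc (Fintype.card V) M i) = pc (Fintype.card V) M i)
    have hnot := card_not_fixed hM hfull
    have huniv : (univ : Finset (Fin τ)).card = τ := by simp
    rw [hIset]
    omega
  set E : Fin (τ - M.card) ≃ {x // x ∈ Iset} :=
    (finCongr hcard.symm).trans Iset.equivFin.symm with hE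
  set rho : Fin τ → Fin τ :=
    fun j => (rmap (Fintype.card V) M (pc (Fintype.card V) M j)).1 with hrho
  have hpcrho : ∀ j : Fin τ, rmap (Fintype.card V) M (pc (Fintype.card V) M j) =
      pc (Fintype.card V) M (rho j) := fun j => root_chosen hM hfull j
  have hrho_mem : ∀ j : Fin τ, rho j ∈ Iset := by
    intro j
    rw [hIset, Finset.mem_filter]
    refine ⟨mem_univ _, ?_⟩
    rw [← hpcrho j]
    exact rmap_fix hM hfull _
  refine ⟨fun w k => ∑ j ∈ univ.filter (fun j => rho j = (E k : Fin τ)),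
    (if μ w j = chi (Fintype.card V) M j then (1 : ℤ) else 0), fun u v => ?_⟩
  set d : Fin τ → ℤ := fun j =>
    (if μ u j = chi (Fintype.card V) M j then (1 : ℤ) else 0) -
      (if μ v j = chi (Fintype.card V) M j then (1 : ℤ) else 0)
    with hd
  have huv : ∀ j : Fin τ, 0 < d j →
      u ∈ SC μ (pc (Fintype.card V) M j) ∧ v ∉ SC μ (pc (Fintype.card V) M j) := by
    intro j hdj
    simp only [hd] at hdj
    by_cases h1 : μ u j = chi (Fintype.card V) M j
    · by_cases h2 : μ v j = chi (Fintype.card V) M j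
      · rw [if_pos h1, if_pos h2] at hdj; omega
      · exact ⟨h1, h2⟩
    · by_cases h2 : μ v j = chi (Fintype.card V) M j
      · rw [if_neg h1, if_pos h2] at hdj; omega
      · rw [if_neg h1, if_neg h2] at hdj; omega
  have hvu : ∀ j : Fin τ, d j < 0 →
      v ∈ SC μ (pc (Fintype.card V) M j) ∧ u ∉ SC μ (pc (Fintype.card V) M j) := by
    intro j hdj
    simp only [hd] at hdj
    by_cases h1 : μ u j = chi (Fintype.card V) M j
    · by_cases h2 : μ v j = chi (Fintype.card V) M j
      · rw [if_pos h1, if_pos h2] at hdj; omega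
      · rw [if_pos h1, if_neg h2] at hdj; omega
    · by_cases h2 : μ v j = chi (Fintype.card V) M j
      · exact ⟨h2, h1⟩
      · rw [if_neg h1, if_neg h2] at hdj; omega
  have hcomp : ∀ j j' : Fin τ, rho j = rho j' →
      SC μ (pc (Fintype.card V) M j) ⊆ SC μ (pc (Fintype.card V) M j') ∨
        SC μ (pc (Fintype.card V) M j') ⊆ SC μ (pc (Fintype.card V) M j) := by
    intro j j' hjj
    apply SC_comp hM hfull
    rw [hpcrho j, hpcrho j', hjj]
  have hstep1 : ∀ k, |∑ j ∈ univ.filter (fun j => rho j = (E k : Fin τ)), d j| =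
      ∑ j ∈ univ.filter (fun j => rho j = (E k : Fin τ)), |d j| := by
    intro k
    apply abs_sum_of_sign
    by_cases hex : ∃ j ∈ univ.filter (fun j => rho j = (E k : Fin τ)), 0 < d j
    · left
      intro j hj
      by_contra hneg
      push_neg at hneg
      have hneg' : d j < 0 := hneg
      obtain ⟨jp, hjp, hjp2⟩ := hex
      rw [Finset.mem_filter] at hj hjp
      obtain ⟨hu1, hv1⟩ := huv jp hjp2
      obtain ⟨hv2, hu2⟩ := hvu j hneg'
      rcases hcomp jp j (by rw [hjp.2, hj.2]) with hss | hss
      · exact hu2 (hss hu1)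
      · exact hv1 (hss hv2)
    · right
      intro j hj
      by_contra hpos
      push_neg at hpos
      exact hex ⟨j, hj, hpos⟩
  calc ∑ k, |(∑ j ∈ univ.filter (fun j => rho j = (E k : Fin τ)),
        (if μ u j = chi (Fintype.card V) M j then (1 : ℤ) else 0)) -
        ∑ j ∈ univ.filter (fun j => rho j = (E k : Fin τ)),
        (if μ v j = chi (Fintype.card V) M j then (1 : ℤ) else 0)|
      = ∑ k, |∑ j ∈ univ.filter (fun j => rho j = (E k : Fin τ)), d j| := by
        apply Finset.sum_congr rfl
        intro k _
        rw [← Finset.sum_sub_distrib]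
    _ = ∑ k, ∑ j ∈ univ.filter (fun j => rho j = (E k : Fin τ)), |d j| := by
        apply Finset.sum_congr rfl
        intro k _
        exact hstep1 k
    _ = ∑ x : {x // x ∈ Iset}, ∑ j ∈ univ.filter (fun j => rho j = (x : Fin τ)), |d j| :=
        Equiv.sum_comp E (fun x : {x // x ∈ Iset} =>
          ∑ j ∈ univ.filter (fun j => rho j = (x : Fin τ)), |d j|)
    _ = ∑ i ∈ Iset, ∑ j ∈ univ.filter (fun j => rho j = i), |d j| :=
        Finset.sum_coe_sort Iset (fun i => ∑ j ∈ univ.filter (fun j => rho j = i), |d j|)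
    _ = ∑ j : Fin τ, |d j| :=
        Finset.sum_fiberwise_of_maps_to (fun j _ => hrho_mem j) _
    _ = ∑ j : Fin τ, (if μ u j = μ v j then (0 : ℤ) else 1) := by
        apply Finset.sum_congr rfl
        intro j _
        simp only [hd]
        cases h1 : μ u j <;> cases h2 : μ v j <;> cases h3 : chi (Fintype.card V) M j <;>
          simp [h1, h2, h3]
    _ = (G.dist u v : ℤ) := by
        rw [← hiso u v, hamming_card, Finset.card_filter]
        push_cast
        apply Finset.sum_congr rfl
        intro j _
        by_cases h : μ u j = μ v j <;> simp [h]


omit hM hfull in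
lemma semicube_flip (i : Fin τ) (b : Bool) :
    semicube μ i (!b) = (semicube μ i b)ᶜ := by
  ext w
  simp only [semicube, Set.mem_setOf_eq, Set.mem_compl_iff]
  cases h : μ w i <;> cases b <;> simp



end EppAux

namespace EppAux
set_option linter.unusedSectionVars false
set_option maxHeartbeats 1000000

variable {V : Type*} [Fintype V] [DecidableEq V] {G : SimpleGraph V}

lemma exists_cross {p : V → Prop} :
    ∀ {a b : V}, G.Walk a b → p a → ¬ p b → ∃ u v, G.Adj u v ∧ p u ∧ ¬ p v := by
  intro a b w
  induction w with
  | nil => intro ha hb; exact absurd ha hb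
  | @cons u v b h w ih =>
    intro ha hb
    by_cases hc : p v
    · exact ih hc hb
    · exact ⟨u, v, h, ha, hc⟩

lemma flip_unique {ι : Type*} [Fintype ι] [DecidableEq ι] {x y : ι → Bool}
    (h : hammingDist x y = 1) : ∃ i, x i ≠ y i ∧ ∀ j, x j ≠ y j → j = i := by
  rw [hamming_card] at h
  obtain ⟨i, hi⟩ := Finset.card_eq_one.mp h
  refine ⟨i, ?_, fun j hj => ?_⟩
  · have : i ∈ univ.filter (fun i => x i ≠ y i) := hi ▸ Finset.mem_singleton_self i
    exact (Finset.mem_filter.mp this).2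
  · have : j ∈ univ.filter (fun i => x i ≠ y i) := Finset.mem_filter.mpr ⟨mem_univ _, hj⟩
    rw [hi] at this
    exact Finset.mem_singleton.mp this

lemma int_unit_sum {n : ℕ} {f : Fin n → ℤ} (h1 : ∑ t, |f t| = 1) :
    ∃ t, |f t| = 1 ∧ ∀ s, s ≠ t → f s = 0 := by
  have hex : ∃ t, f t ≠ 0 := by
    by_contra hc
    push_neg at hc
    rw [Finset.sum_congr rfl (fun t _ => by rw [hc t, abs_zero])] at h1
    simp at h1
  obtain ⟨t, ht⟩ := hex
  have hle : |f t| ≤ 1 := by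
    rw [← h1]
    exact Finset.single_le_sum (fun s _ => abs_nonneg (f s)) (mem_univ t)
  have habs : |f t| = 1 := by
    have : 0 < |f t| := abs_pos.mpr ht
    omega
  refine ⟨t, habs, fun s hs => ?_⟩
  have hzero : ∑ x ∈ univ.erase t, |f x| = 0 := by
    have h2 : ∑ x ∈ univ.erase t, |f x| + |f t| = ∑ x, |f x| :=
      Finset.sum_erase_add univ _ (mem_univ t)
    omega
  have := (Finset.sum_eq_zero_iff_of_nonneg
    (fun x _ => abs_nonneg (f x))).mp hzero s (Finset.mem_erase.mpr ⟨hs, mem_univ s⟩)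
  exact abs_eq_zero.mp this

variable {τ : ℕ} {μ : V → Fin τ → Bool}
  (hconn : G.Connected)
  (hiso : ∀ u v : V, hammingDist (μ u) (μ v) = G.dist u v)
  (hfull : ∀ i : Fin τ, (∃ v, μ v i = false) ∧ (∃ v, μ v i = true))

include hiso in
lemma adj_hamming {u v : V} (h : G.Adj u v) : hammingDist (μ u) (μ v) = 1 := by
  rw [hiso]; exact SimpleGraph.dist_eq_one_iff_adj.mpr h

include hconn hfull in
lemma coord_edge (i : Fin τ) : ∃ u v, G.Adj u v ∧ μ u i ≠ μ v i := by
  obtain ⟨⟨a, ha⟩, ⟨b, hb⟩⟩ := hfull i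
  have hw : G.Walk a b := (hconn.preconnected a b).some
  obtain ⟨u, v, huv, hu, hv⟩ := exists_cross (p := fun w => μ w i = false) hw ha
    (by simp [hb])
  have hu' : μ u i = false := hu
  have hv' : ¬ μ v i = false := hv
  refine ⟨u, v, huv, ?_⟩
  rw [hu']
  intro hc
  exact hv' hc.symm

include hconn hiso hfull in
lemma semicube_inj {i j : Fin τ} {a b : Bool}
    (h : semicube μ i a = semicube μ j b) : i = j ∧ a = b := by
  by_cases hij : i = j
  · subst hij
    refine ⟨rfl, ?_⟩
    by_contra hab
    obtain ⟨w, hw⟩ : (semicube μ i a).Nonempty := by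
      cases a
      · exact (hfull i).1
      · exact (hfull i).2
    have hw2 : w ∈ semicube μ i b := h ▸ hw
    have : a = b := hw.symm.trans hw2
    exact hab this
  · exfalso
    have key : ∀ w : V, μ w i = a ↔ μ w j = b := fun w =>
      ⟨fun hw => (Set.ext_iff.mp h w).mp hw, fun hw => (Set.ext_iff.mp h w).mpr hw⟩
    obtain ⟨u, v, huv, hne⟩ := coord_edge hconn hfull i
    have hnej : μ u j ≠ μ v j := by
      intro hc
      -- from key: μ u i = a ↔ μ u j = b and same for v; μ u j = μ v j forces μ u i = μ v i
      have h1 := key u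
      have h2 := key v
      apply hne
      cases hua : μ u i <;> cases hva : μ v i <;> cases hb' : b <;> cases ha' : a <;>
        simp_all
    have hh := adj_hamming hiso huv
    obtain ⟨i0, hi0, huniq⟩ := flip_unique hh
    have e1 := huniq i hne
    have e2 := huniq j hnej
    exact hij (e1.trans e2.symm)


lemma hamming_z {ι : Type*} [Fintype ι] [DecidableEq ι] (x y : ι → Bool) :
    (hammingDist x y : ℤ) = ∑ j, (if x j = y j then (0 : ℤ) else 1) := by
  rw [hamming_card, Finset.card_filter]
  push_cast
  apply Finset.sum_congr rfl
  intro j _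
  by_cases h : x j = y j <;> simp [h]

section lamsec

variable {d' : ℕ} {lam : V → Fin d' → ℤ}
  (hlam : ∀ u v : V, ∑ i, |lam u i - lam v i| = (G.dist u v : ℤ))

include hlam in
lemma adj_lam_one {u v : V} (h : G.Adj u v) : ∑ t, |lam u t - lam v t| = 1 := by
  rw [hlam u v, SimpleGraph.dist_eq_one_iff_adj.mpr h]
  norm_num

include hlam in
lemma edge_lam {u v : V} (h : G.Adj u v) :
    ∃ t, (lam v t = lam u t + 1 ∨ lam u t = lam v t + 1) ∧
      ∀ s, s ≠ t → lam u s = lam v s := by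
  obtain ⟨t, h1, h2⟩ := int_unit_sum (adj_lam_one hlam h)
  refine ⟨t, ?_, fun s hs => by have := h2 s hs; omega⟩
  rcases (abs_eq (by norm_num : (0:ℤ) ≤ 1)).mp h1 with h' | h' <;> omega

include hlam in
lemma cross_coord {u v : V} (h : G.Adj u v) {t t' : Fin d'}
    (h1 : lam u t ≠ lam v t) (h2 : lam u t' ≠ lam v t') : t = t' := by
  obtain ⟨t0, _, huniq⟩ := int_unit_sum (adj_lam_one hlam h)
  have e1 : t = t0 := by
    by_contra hc
    exact h1 (by have := huniq t hc; omega)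
  have e2 : t' = t0 := by
    by_contra hc
    exact h2 (by have := huniq t' hc; omega)
  rw [e1, e2]

include hiso hlam in
lemma cut_key {u v : V} (huv : G.Adj u v) {i : Fin τ}
    (hiu : μ u i ≠ μ v i) (hiuniq : ∀ j, μ u j ≠ μ v j → j = i)
    {t : Fin d'} (ht1 : lam v t = lam u t + 1)
    (hts : ∀ s, s ≠ t → lam u s = lam v s) :
    ∀ w, (μ w i = μ u i ↔ lam w t ≤ lam u t) := by
  intro w
  have hμ : (G.dist w v : ℤ) - (G.dist w u : ℤ) =
      (if μ w i = μ u i then 1 else -1) := by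
    rw [← hiso w v, ← hiso w u, hamming_z, hamming_z, ← Finset.sum_sub_distrib]
    rw [Finset.sum_eq_single i]
    · cases hw : μ w i <;> cases hu2 : μ u i <;> cases hv2 : μ v i <;> simp_all
    · intro b _ hb
      have : μ u b = μ v b := by
        by_contra hc
        exact hb (hiuniq b hc)
      rw [this]
      by_cases hh : μ w b = μ v b <;> simp [hh]
    · intro hcon
      exact absurd (mem_univ i) hcon
  have hlmb : (G.dist w v : ℤ) - (G.dist w u : ℤ) =
      (if lam w t ≤ lam u t then 1 else -1) := by
    rw [← hlam w v, ← hlam w u, ← Finset.sum_sub_distrib]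
    rw [Finset.sum_eq_single t]
    · rcases le_or_gt (lam w t) (lam u t) with h | h
      · rw [if_pos h, abs_of_nonpos (by omega), abs_of_nonpos (by omega)]
        omega
      · rw [if_neg (not_le.mpr h), abs_of_nonneg (by omega), abs_of_nonneg (by omega)]
        omega
    · intro b _ hb
      rw [← hts b hb]
      simp
    · intro hcon
      exact absurd (mem_univ t) hcon
  rw [hμ] at hlmb
  constructor
  · intro h
    rw [if_pos h] at hlmb
    by_contra hc
    rw [if_neg hc] at hlmb
    omega
  · intro h
    rw [if_pos h] at hlmb
    by_contra hc
    rw [if_neg hc] at hlmb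
    omega


lemma prod_ext' {α β : Type*} {p q : α × β} (h1 : p.1 = q.1) (h2 : p.2 = q.2) : p = q := by
  cases p; cases q; cases h1; cases h2; rfl

include hconn hiso hfull hlam in
lemma part2 {M : Finset (Sym2 (Fin τ × Bool))}
    (hM : IsMatchingIn (semicubeGraph μ) M)
    (hmax : ∀ M' : Finset (Sym2 (Fin τ × Bool)),
      IsMatchingIn (semicubeGraph μ) M' → M'.card ≤ M.card)
    (hd' : d' < τ - M.card) : False := by
  classical
  set S0 : Finset (V × V × Fin d') := univ.filter
    (fun x => G.Adj x.1 x.2.1 ∧ lam x.2.1 x.2.2 = lam x.1 x.2.2 + 1) with hS0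
  set A : Finset (Fin d' × ℤ) := S0.image (fun x => (x.2.2, lam x.1 x.2.2)) with hA
  have hmemA : ∀ tc : Fin d' × ℤ, (tc ∈ A ↔
      ∃ u v, G.Adj u v ∧ lam v tc.1 = lam u tc.1 + 1 ∧ lam u tc.1 = tc.2) := by
    intro tc
    rw [hA, Finset.mem_image]
    constructor
    · rintro ⟨x, hx, hxe⟩
      rw [hS0, Finset.mem_filter] at hx
      obtain ⟨-, hadj, hstep⟩ := hx
      subst hxe
      exact ⟨x.1, x.2.1, hadj, hstep, rfl⟩
    · rintro ⟨u, v, hadj, hstep, hval⟩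
      refine ⟨(u, v, tc.1), ?_, ?_⟩
      · rw [hS0, Finset.mem_filter]
        exact ⟨mem_univ _, hadj, hstep⟩
      · exact prod_ext' rfl hval
  have htau : 0 < τ := by omega
  have hAcut : ∀ tc : Fin d' × ℤ, ∃ pi : Fin τ × Bool,
      tc ∈ A → semicube μ pi.1 pi.2 = {w : V | lam w tc.1 ≤ tc.2} := by
    intro tc
    by_cases h : tc ∈ A
    · obtain ⟨u, v, hadj, hstep, hval⟩ := (hmemA tc).mp h
      obtain ⟨i, hi, hiuniq⟩ := flip_unique (adj_hamming hiso hadj)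
      have hts : ∀ s, s ≠ tc.1 → lam u s = lam v s := by
        intro s hs
        obtain ⟨t0, h1, h2⟩ := int_unit_sum (adj_lam_one hlam hadj)
        have htt : tc.1 = t0 := by
          by_contra hc
          have := h2 tc.1 hc
          omega
        have := h2 s (by rw [htt] at hs; exact hs)
        omega
      refine ⟨(i, μ u i), fun _ => ?_⟩
      ext w
      have hck := cut_key hiso hlam hadj hi hiuniq hstep hts w
      simp only [semicube, Set.mem_setOf_eq]
      rw [← hval]
      exact hck
    · exact ⟨(⟨0, htau⟩, false), fun hc => absurd hc h⟩
  choose P hP using hAcut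
  -- injectivity of tc ↦ (P tc).1 on A
  have hPinj : ∀ tc ∈ A, ∀ tc' ∈ A, (P tc).1 = (P tc').1 → tc = tc' := by
    intro tc htc tc' htc' hfst
    obtain ⟨u, v, hadj, hstep, hval⟩ := (hmemA tc).mp htc
    obtain ⟨u', v', hadj', hstep', hval'⟩ := (hmemA tc').mp htc'
    have hset := hP tc htc
    have hset' := hP tc' htc'
    by_cases hsnd : (P tc).2 = (P tc').2
    · have hPP : P tc = P tc' := prod_ext' hfst hsnd
      have hLL : {w : V | lam w tc.1 ≤ tc.2} = {w : V | lam w tc'.1 ≤ tc'.2} := by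
        rw [← hset, hPP, hset']
      have hteq : tc.1 = tc'.1 := by
        by_contra hc
        have hu2 : lam u tc'.1 ≤ tc'.2 :=
          (Set.ext_iff.mp hLL u).mp (by simp only [Set.mem_setOf_eq]; omega)
        have hv2 : ¬ lam v tc'.1 ≤ tc'.2 := fun hh =>
          (by omega : ¬ lam v tc.1 ≤ tc.2) ((Set.ext_iff.mp hLL v).mpr hh)
        exact hc (cross_coord hlam hadj (by omega) (by omega))
      refine prod_ext' hteq ?_
      by_contra hc
      rcases lt_or_gt_of_ne hc with hlt | hgt
      · have := (Set.ext_iff.mp hLL u').mpr (by simp only [Set.mem_setOf_eq]; omega)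
        simp only [Set.mem_setOf_eq] at this
        rw [hteq] at this
        omega
      · have := (Set.ext_iff.mp hLL u).mp (by simp only [Set.mem_setOf_eq]; omega)
        simp only [Set.mem_setOf_eq] at this
        rw [← hteq] at this
        omega
    · have hsnd' : (P tc').2 = !(P tc).2 := by
        cases h1 : (P tc).2 <;> cases h2 : (P tc').2 <;> simp_all
      have hLL : {w : V | lam w tc'.1 ≤ tc'.2} = {w : V | lam w tc.1 ≤ tc.2}ᶜ := by
        rw [← hset', ← hset, ← hfst, hsnd']
        exact semicube_flip _ _
      by_cases hteq : tc.1 = tc'.1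
      · exfalso
        have hu3 : ¬ lam u tc'.1 ≤ tc'.2 := fun hh =>
          ((Set.ext_iff.mp hLL u).mp hh) (by simp only [Set.mem_setOf_eq]; omega)
        have hv3 : lam v tc'.1 ≤ tc'.2 := by
          have hvc : v ∈ {w : V | lam w tc.1 ≤ tc.2}ᶜ := by
            simp only [Set.mem_compl_iff, Set.mem_setOf_eq]
            omega
          exact (Set.ext_iff.mp hLL v).mpr hvc
        rw [← hteq] at hu3 hv3
        omega
      · exfalso
        have hu3 : ¬ lam u tc'.1 ≤ tc'.2 := fun hh =>
          ((Set.ext_iff.mp hLL u).mp hh) (by simp only [Set.mem_setOf_eq]; omega)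
        have hv3 : lam v tc'.1 ≤ tc'.2 := by
          have hvc : v ∈ {w : V | lam w tc.1 ≤ tc.2}ᶜ := by
            simp only [Set.mem_compl_iff, Set.mem_setOf_eq]
            omega
          exact (Set.ext_iff.mp hLL v).mpr hvc
        exact hteq (cross_coord hlam hadj (by omega) (by omega))
  -- every coordinate of μ appears among cuts
  have hsur : ∀ i : Fin τ, ∃ tc, tc ∈ A ∧ (P tc).1 = i := by
    intro i
    obtain ⟨u, v, hadj, hne⟩ := coord_edge hconn hfull i
    have hkey : ∀ (a b : V) (t : Fin d'), G.Adj a b → μ a i ≠ μ b i →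
        lam b t = lam a t + 1 → (∀ s, s ≠ t → lam a s = lam b s) →
        ∃ tc, tc ∈ A ∧ (P tc).1 = i := by
      intro a b t hab hne' hstep hts
      have hmem : ((t, lam a t) : Fin d' × ℤ) ∈ A :=
        (hmemA _).mpr ⟨a, b, hab, hstep, rfl⟩
      refine ⟨(t, lam a t), hmem, ?_⟩
      have hset := hP _ hmem
      obtain ⟨i0, hi0, hiuniq⟩ := flip_unique (adj_hamming hiso hab)
      have hcut := cut_key hiso hlam hab hi0 hiuniq hstep hts
      have hsc : semicube μ i0 (μ a i0) = {w : V | lam w t ≤ lam a t} :=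
        Set.ext fun w => hcut w
      have hinj := semicube_inj hconn hiso hfull (hset.trans hsc.symm)
      exact hinj.1.trans (hiuniq i hne').symm
    obtain ⟨t, hdisj, hts⟩ := edge_lam hlam hadj
    rcases hdisj with hstep | hstep
    · exact hkey u v t hadj hne hstep hts
    · exact hkey v u t hadj.symm (Ne.symm hne) hstep (fun s hs => (hts s hs).symm)
  choose J hJA hJfst using hsur
  have hAcard : τ ≤ A.card := by
    have hinj : Set.InjOn J ↑(univ : Finset (Fin τ)) := by
      intro a _ b _ hab
      have h1 := hJfst a
      have h2 := hJfst b
      rw [hab] at h1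
      exact (h1.symm.trans h2).symm ▸ rfl
    have := Finset.card_le_card_of_injOn J (fun i _ => hJA i) hinj
    simpa using this
  -- consecutive cuts
  have hCons : ∀ (t : Fin d') (c c' : ℤ), (t, c) ∈ A → (t, c') ∈ A → c < c' →
      ((t, c + 1) : Fin d' × ℤ) ∈ A := by
    intro t c c' h1 h2 hlt
    obtain ⟨u, v, hadj, hstep, hval⟩ := (hmemA _).mp h1
    obtain ⟨u', v', hadj', hstep', hval'⟩ := (hmemA _).mp h2
    dsimp only at hstep hval hstep' hval'
    have hw : G.Walk u v' := (hconn.preconnected u v').some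
    obtain ⟨a, b, hab, hpa, hpb⟩ := exists_cross (p := fun w => lam w t ≤ c + 1) hw
      (by show lam u t ≤ c + 1; omega) (by show ¬ lam v' t ≤ c + 1; omega)
    have hpa' : lam a t ≤ c + 1 := hpa
    have hpb' : ¬ lam b t ≤ c + 1 := hpb
    obtain ⟨t0, hdisj, hts0⟩ := edge_lam hlam hab
    have ht0 : t0 = t := by
      by_contra hc
      have := hts0 t (fun hh => hc hh.symm)
      omega
    rw [ht0] at hdisj
    refine (hmemA _).mpr ⟨a, b, hab, ?_, ?_⟩ <;> (dsimp only; omega)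
  set B := A.filter (fun tc => ((tc.1, tc.2 + 1) : Fin d' × ℤ) ∈ A) with hB
  have hBcard : A.card ≤ B.card + d' := by
    have hsplit := Finset.card_filter_add_card_filter_not (s := A)
      (p := fun tc : Fin d' × ℤ => ((tc.1, tc.2 + 1) : Fin d' × ℤ) ∈ A)
    have hneg : (A.filter (fun tc : Fin d' × ℤ =>
        ¬ ((tc.1, tc.2 + 1) : Fin d' × ℤ) ∈ A)).card ≤ d' := by
      have hinj : Set.InjOn (fun tc : Fin d' × ℤ => tc.1)
          ↑(A.filter (fun tc : Fin d' × ℤ => ¬ ((tc.1, tc.2 + 1) : Fin d' × ℤ) ∈ A)) := by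
        intro x hx y hy hxy
        rw [Finset.mem_coe, Finset.mem_filter] at hx hy
        simp only at hxy
        refine prod_ext' hxy ?_
        by_contra hc
        rcases lt_or_gt_of_ne hc with hlt | hgt
        · have hyA : ((x.1, y.2) : Fin d' × ℤ) ∈ A := by rw [hxy]; exact hy.1
          exact hx.2 (hCons x.1 x.2 y.2 hx.1 hyA hlt)
        · have hxA : ((y.1, x.2) : Fin d' × ℤ) ∈ A := by rw [← hxy]; exact hx.1
          exact hy.2 (hCons y.1 y.2 x.2 hy.1 hxA hgt)
      have := Finset.card_le_card_of_injOn (fun tc : Fin d' × ℤ => tc.1)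
        (fun tc _ => mem_univ tc.1) hinj
      simpa using this
    rw [hB]
    omega
  -- the matching M'
  set F : Fin d' × ℤ → Sym2 (Fin τ × Bool) :=
    fun tc => s(flipP (P tc), P (tc.1, tc.2 + 1)) with hF
  set M' := B.image F with hM'
  have hBmem : ∀ tc ∈ B, tc ∈ A ∧ ((tc.1, tc.2 + 1) : Fin d' × ℤ) ∈ A := by
    intro tc htc
    rw [hB, Finset.mem_filter] at htc
    exact ⟨htc.1, htc.2⟩
  have hsc1 : ∀ tc ∈ A, semicube μ (flipP (P tc)).1 (flipP (P tc)).2 =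
      {w : V | lam w tc.1 ≤ tc.2}ᶜ := by
    intro tc htc
    have : semicube μ (P tc).1 (!(P tc).2) = (semicube μ (P tc).1 (P tc).2)ᶜ :=
      semicube_flip _ _
    rw [hP tc htc] at this
    exact this
  have hedge : ∀ tc ∈ B, F tc ∈ (semicubeGraph μ).edgeSet := by
    intro tc htc
    obtain ⟨htcA, htc1A⟩ := hBmem tc htc
    obtain ⟨u, v, hadj, hstep, hval⟩ := (hmemA _).mp htcA
    rw [hF, SimpleGraph.mem_edgeSet]
    have h1 := hsc1 tc htcA
    have h2 := hP _ htc1A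
    refine ⟨?_, ?_, ?_⟩
    · intro hc
      rw [hc, h2] at h1
      have hu1 : u ∈ {w : V | lam w tc.1 ≤ tc.2 + 1} := by
        simp only [Set.mem_setOf_eq]; omega
      have := h1 ▸ hu1
      simp only [Set.mem_compl_iff, Set.mem_setOf_eq] at this
      omega
    · rw [h1, h2]
      ext w
      simp only [Set.mem_union, Set.mem_compl_iff, Set.mem_setOf_eq, Set.mem_univ,
        iff_true]
      omega
    · rw [h1, h2]
      refine ⟨v, ?_, ?_⟩
      · simp only [Set.mem_compl_iff, Set.mem_setOf_eq]
        omega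
      · simp only [Set.mem_setOf_eq]
        omega
  have hFinjB : ∀ tc ∈ B, ∀ tc' ∈ B, F tc = F tc' → tc = tc' := by
    intro tc htc tc' htc' hFF
    obtain ⟨htcA, htc1A⟩ := hBmem tc htc
    obtain ⟨htcA', htc1A'⟩ := hBmem tc' htc'
    rw [hF] at hFF
    simp only [Sym2.eq_iff] at hFF
    rcases hFF with ⟨ha, hb⟩ | ⟨ha, hb⟩
    · have : (P tc).1 = (P tc').1 := by
        have := congrArg Prod.fst ha
        simpa [flipP] using this
      exact hPinj tc htcA tc' htcA' this
    · exfalso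
      have e1 : (P tc).1 = (P ((tc'.1, tc'.2 + 1) : Fin d' × ℤ)).1 := by
        have := congrArg Prod.fst ha
        simpa [flipP] using this
      have e2 : (P ((tc.1, tc.2 + 1) : Fin d' × ℤ)).1 = (P tc').1 := by
        have := congrArg Prod.fst hb
        simpa [flipP] using this
      have q1 := hPinj tc htcA _ htc1A' e1
      have q2 := hPinj _ htc1A tc' htcA' e2
      have r1 := congrArg Prod.snd q1
      have r2 := congrArg Prod.snd q2
      simp only at r1 r2
      omega
  have hMatch : IsMatchingIn (semicubeGraph μ) M' := by
    constructor
    · intro e he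
      rw [hM', Finset.mem_image] at he
      obtain ⟨tc, htc, rfl⟩ := he
      exact hedge tc htc
    · intro e he f hf hef a hae haf
      rw [hM', Finset.mem_image] at he hf
      obtain ⟨tc, htc, rfl⟩ := he
      obtain ⟨tc', htc', rfl⟩ := hf
      obtain ⟨htcA, htc1A⟩ := hBmem tc htc
      obtain ⟨htcA', htc1A'⟩ := hBmem tc' htc'
      rw [hF] at hae haf
      rw [Sym2.mem_iff] at hae haf
      have hne : tc ≠ tc' := fun hc => hef (by rw [hc])
      rcases hae with rfl | rfl
      · rcases haf with heq | heq
        · have : (P tc).1 = (P tc').1 := by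
            have := congrArg Prod.fst heq
            simpa [flipP] using this
          exact hne (hPinj tc htcA tc' htcA' this)
        · have e1 : (P tc).1 = (P ((tc'.1, tc'.2 + 1) : Fin d' × ℤ)).1 := by
            have := congrArg Prod.fst heq
            simpa [flipP] using this
          have q1 := hPinj tc htcA _ htc1A' e1
          rw [q1] at heq
          have := congrArg Prod.snd heq
          simp only [flipP] at this
          simp at this
      · rcases haf with heq | heq
        · have e1 : (P ((tc.1, tc.2 + 1) : Fin d' × ℤ)).1 = (P tc').1 := by
            have := congrArg Prod.fst heq.symm
            simpa [flipP] using this.symm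
          have q1 := hPinj _ htc1A tc' htcA' e1
          rw [← q1] at heq
          have := congrArg Prod.snd heq
          simp only [flipP] at this
          simp at this
        · have e1 : (P ((tc.1, tc.2 + 1) : Fin d' × ℤ)).1 =
              (P ((tc'.1, tc'.2 + 1) : Fin d' × ℤ)).1 := congrArg Prod.fst heq
          have q1 := hPinj _ htc1A _ htc1A' e1
          have r1 := congrArg Prod.fst q1
          have r2 := congrArg Prod.snd q1
          simp only at r1 r2
          exact hne (prod_ext' r1 (by omega))
  have hM'card : M'.card = B.card := by
    rw [hM']
    apply Finset.card_image_of_injOn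
    intro x hx y hy hxy
    exact hFinjB x (Finset.mem_coe.mp hx) y (Finset.mem_coe.mp hy) hxy
  have hfin := hmax M' hMatch
  omega

end lamsec



end EppAux



/-- **Theorem 1.** If `G` is a finite connected graph with a full-dimensional
hypercube isometry `μ : V → {0,1}^τ` (so `G` is a partial cube with isometric
dimension `τ`), and `M` is a maximum matching in the semicube graph `Sc(G)`,
then the lattice dimension of `G` is `τ − |M|`: `G` embeds isometrically into
`ℤ^(τ−|M|)` but into no `ℤ^d'` with `d' < τ − |M|`. -/
theorem lattice_dimension_eq_tau_sub_max_matching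
    {V : Type*} [Fintype V] [DecidableEq V]
    (G : SimpleGraph V) (hconn : G.Connected)
    (τ : ℕ) (μ : V → Fin τ → Bool)
    (hiso : ∀ u v : V, hammingDist (μ u) (μ v) = G.dist u v)
    (hfull : ∀ i : Fin τ, (∃ v, μ v i = false) ∧ (∃ v, μ v i = true))
    (M : Finset (Sym2 (Fin τ × Bool)))
    (hM : IsMatchingIn (semicubeGraph μ) M)
    (hmax : ∀ M' : Finset (Sym2 (Fin τ × Bool)),
      IsMatchingIn (semicubeGraph μ) M' → M'.card ≤ M.card) :
    (∃ lam : V → Fin (τ - M.card) → ℤ,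
      ∀ u v : V, ∑ i, |lam u i - lam v i| = (G.dist u v : ℤ)) ∧
    (∀ d' : ℕ, d' < τ - M.card →
      ¬∃ lam : V → Fin d' → ℤ,
        ∀ u v : V, ∑ i, |lam u i - lam v i| = (G.dist u v : ℤ)) := by
  constructor
  · exact EppAux.part1 hM hfull G hiso
  · rintro d' hd' ⟨lam, hlam⟩
    exact EppAux.part2 hconn hiso hfull hlam hM hmax hd'
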